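/- Let ρ be a density operator of rank r on a finite-dimensional Hilbert space, and consider the SDP minimizing Σ_a tr(σ_a A_a) over σ_a ≥ 0 with Σ_a σ_a = ρ, where the A_a are Hermitian. Then there exists an optimal solution with at most r² nonzero σ_a. -/

import Mathlib

open Matrix BigOperators
open scoped ComplexOrder

attribute [local instance] Matrix.normedAddCommGroup Matrix.normedSpace

-- quadratic form expansion
lemma psd_quad {n : Type*} [Fintype n] [DecidableEq n] {M : Matrix n n ℂ}
    (hM : M.PosSemidef) (i j : n) (c : ℂ) :
    0 ≤ ((starRingEnd ℂ) c * (M i i * c + M i j) + (M j i * c + M j j)).re := by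
  have h := hM.re_dotProduct_nonneg (Pi.single i c + Pi.single j 1)
  rw [RCLike.re_to_complex] at h
  convert h using 2
  rw [star_add, mulVec_add, ← Pi.single_star, ← Pi.single_star, star_one]
  simp only [dotProduct_add, add_dotProduct, single_dotProduct, mulVec_single, one_mul,
    Complex.star_def, Pi.smul_apply, MulOpposite.smul_eq_mul_unop, MulOpposite.unop_op,
    col_apply, mul_one]
  ring

lemma psd_diag_im {n : Type*} [Fintype n] {M : Matrix n n ℂ}
    (hM : M.PosSemidef) (i : n) : (M i i).im = 0 := by
  have h := congrFun (congrFun hM.1 i) i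
  have h2 : (M i i).im = -(M i i).im := by
    simpa [Matrix.conjTranspose_apply, Complex.ext_iff] using congrArg Complex.im h.symm
  linarith

lemma psd_diag_re {n : Type*} [Fintype n] [DecidableEq n] {M : Matrix n n ℂ}
    (hM : M.PosSemidef) (i : n) : 0 ≤ (M i i).re := by
  have h := hM.re_dotProduct_nonneg (Pi.single i 1)
  rw [RCLike.re_to_complex] at h
  rw [← Pi.single_star, star_one] at h
  simpa [single_dotProduct, mulVec_single] using h

lemma psd_conj_entry {n : Type*} [Fintype n] {M : Matrix n n ℂ}
    (hM : M.PosSemidef) (i j : n) : M j i = (starRingEnd ℂ) (M i j) := by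
  have h := congrFun (congrFun hM.1 j) i
  simp only [Matrix.conjTranspose_apply] at h
  exact h.symm

lemma psd_entry_zero {n : Type*} [Fintype n] [DecidableEq n] {M : Matrix n n ℂ}
    (hM : M.PosSemidef) {i : n} (hii : M i i = 0) (j : n) : M i j = 0 := by
  by_contra hne
  set s : ℝ := Complex.normSq (M i j) with hs
  have hnsq : 0 < s := Complex.normSq_pos.2 hne
  set t : ℝ := ((M j j).re + 1) / s with ht
  have h := psd_quad hM i j (-(t : ℂ) * M i j)
  rw [hii, psd_conj_entry hM i j] at h
  have hz : (starRingEnd ℂ) (M i j) * M i j = (s : ℂ) := by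
    rw [mul_comm, hs, Complex.mul_conj]
  have hexp : (starRingEnd ℂ) (-(t : ℂ) * M i j) * (0 * (-(t : ℂ) * M i j) + M i j) +
      ((starRingEnd ℂ) (M i j) * (-(t : ℂ) * M i j) + M j j)
      = (((-(2*t) * s : ℝ)) : ℂ) + M j j := by
    simp only [_root_.map_mul, map_neg, Complex.conj_ofReal]
    push_cast
    linear_combination (-(2:ℂ)*(t:ℂ)) * hz
  rw [hexp] at h
  have hre : ((((-(2*t) * s : ℝ)) : ℂ) + M j j).re = -(2*t) * s + (M j j).re := by
    simp
  rw [hre] at h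
  have hts : t * s = (M j j).re + 1 := div_mul_cancel₀ _ (ne_of_gt hnsq)
  have : -(2*t) * s = -2 * (t * s) := by ring
  rw [this, hts] at h
  have := psd_diag_re hM j
  linarith

lemma psd_trace_re_nonneg {n : Type*} [Fintype n] [DecidableEq n] {M : Matrix n n ℂ}
    (hM : M.PosSemidef) : 0 ≤ M.trace.re := by
  have : M.trace.re = ∑ k, (M k k).re := by
    simp [Matrix.trace, Matrix.diag, Complex.re_sum]
  rw [this]
  exact Finset.sum_nonneg fun k _ => psd_diag_re hM k

lemma psd_entry_norm_le {n : Type*} [Fintype n] [DecidableEq n] {M : Matrix n n ℂ}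
    (hM : M.PosSemidef) (i j : n) : ‖M i j‖ ≤ M.trace.re := by
  have htr : M.trace.re = ∑ k, (M k k).re := by
    simp [Matrix.trace, Matrix.diag, Complex.re_sum]
  have hsum : ∀ (sf : Finset n), (∑ k ∈ sf, (M k k).re) ≤ M.trace.re := by
    intro sf
    rw [htr]
    exact Finset.sum_le_sum_of_subset_of_nonneg (Finset.subset_univ sf)
      (fun k _ _ => psd_diag_re hM k)
  by_cases hij : i = j
  · subst hij
    have him := psd_diag_im hM i
    have hre := psd_diag_re hM i
    have hnorm : ‖M i i‖ = (M i i).re := by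
      have hzz : M i i = (((M i i).re : ℝ) : ℂ) := by
        apply Complex.ext <;> simp [him]
      rw [hzz]
      simp [abs_of_nonneg hre]
    rw [hnorm]
    calc (M i i).re = ∑ k ∈ {i}, (M k k).re := by simp
    _ ≤ M.trace.re := hsum {i}
  · by_cases hz0 : M i j = 0
    · rw [hz0, norm_zero]
      exact psd_trace_re_nonneg hM
    · set a : ℝ := ‖M i j‖ with ha
      have hapos : 0 < a := norm_pos_iff.2 hz0
      set z := M i j with hzdef
      have hz : (starRingEnd ℂ) z * z = ((a : ℂ))^2 := by
        rw [mul_comm, Complex.mul_conj, Complex.normSq_eq_norm_sq]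
        push_cast
        ring
      have hau : ((a : ℂ))⁻¹ * (a : ℂ) = 1 := by
        rw [inv_mul_cancel₀]
        exact_mod_cast hapos.ne'
      have h := psd_quad hM i j (-((a : ℂ))⁻¹ * z)
      rw [psd_conj_entry hM i j, ← hzdef] at h
      have hexp : (starRingEnd ℂ) (-((a : ℂ))⁻¹ * z) * (M i i * (-((a : ℂ))⁻¹ * z) + z) +
          ((starRingEnd ℂ) z * (-((a : ℂ))⁻¹ * z) + M j j)
          = M i i + M j j - ((2 * a : ℝ) : ℂ) := by
        simp only [_root_.map_mul, map_neg, map_inv₀, Complex.conj_ofReal]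
        push_cast
        linear_combination (((a:ℂ))⁻¹^2 * M i i - 2*((a:ℂ))⁻¹) * hz +
          (M i i * (((a:ℂ))⁻¹*(a:ℂ) + 1) - 2*(a:ℂ)) * hau
      rw [hexp] at h
      have hre : (M i i + M j j - ((2 * a : ℝ) : ℂ)).re = (M i i).re + (M j j).re - 2*a := by
        simp
      rw [hre] at h
      have h2 : a ≤ (M i i).re + (M j j).re := by linarith
      calc a ≤ (M i i).re + (M j j).re := h2
      _ = ∑ k ∈ {i, j}, (M k k).re := by rw [Finset.sum_pair hij]
      _ ≤ M.trace.re := hsum {i, j}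

lemma psd_smul_real {n : Type*} [Fintype n] {M : Matrix n n ℂ} {r : ℝ}
    (hr : 0 ≤ r) (hM : M.PosSemidef) : (((r : ℝ) : ℂ) • M).PosSemidef := by
  constructor
  · rw [Matrix.IsHermitian, Matrix.conjTranspose_smul, Complex.star_def,
      Complex.conj_ofReal, hM.1.eq]
  · exact (hM.smul (show (0:ℂ) ≤ ((r:ℝ):ℂ) by exact_mod_cast hr)).2

lemma psd_sum {ι n : Type*} [Fintype n] (s : Finset ι) (σ : ι → Matrix n n ℂ)
    (h : ∀ a ∈ s, (σ a).PosSemidef) : (∑ a ∈ s, σ a).PosSemidef := by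
  classical
  induction s using Finset.induction_on with
  | empty => simpa using Matrix.PosSemidef.zero
  | @insert a s hnot ih =>
    rw [Finset.sum_insert hnot]
    exact (h _ (Finset.mem_insert_self _ _)).add (ih fun b hb => h b (Finset.mem_insert_of_mem hb))

lemma exists_real_dependence {n ι : Type*} [Fintype n] [DecidableEq n] [Fintype ι]
    (ρ : Matrix n n ℂ) (hρ : ρ.PosSemidef)
    (σ : ι → Matrix n n ℂ) (hpsd : ∀ a, (σ a).PosSemidef) (hsum : ∑ a, σ a = ρ)
    (hcard : ρ.rank ^ 2 < (Finset.univ.filter fun a => σ a ≠ 0).card) :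
    ∃ c : ι → ℝ, (∑ a, ((c a : ℝ) : ℂ) • σ a = 0) ∧ (∃ a, c a ≠ 0) ∧
      (∀ a, c a ≠ 0 → σ a ≠ 0) := by
  classical
  obtain ⟨U, hU1, hU2, d, hdiag, hrank⟩ :
      ∃ U : Matrix n n ℂ, U * star U = 1 ∧ star U * U = 1 ∧ ∃ d : n → ℝ,
        star U * ρ * U = Matrix.diagonal (fun i => (d i : ℂ)) ∧
        ρ.rank = Fintype.card {i // d i ≠ 0} := by
    refine ⟨hρ.1.eigenvectorUnitary, (Matrix.mem_unitaryGroup_iff).mp hρ.1.eigenvectorUnitary.2,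
      (Matrix.mem_unitaryGroup_iff').mp hρ.1.eigenvectorUnitary.2, hρ.1.eigenvalues, ?_,
      hρ.1.rank_eq_card_non_zero_eigs⟩
    have := hρ.1.conjStarAlgAut_star_eigenvectorUnitary
    rw [Unitary.conjStarAlgAut_star_apply] at this
    rw [this]
    rfl
  set S := Finset.univ.filter fun a => σ a ≠ 0 with hS
  set N : ι → Matrix n n ℂ := fun a => star U * σ a * U with hN
  have hNpsd : ∀ a, (N a).PosSemidef := fun a => by
    rw [hN]
    simpa [Matrix.star_eq_conjTranspose] using
      Matrix.PosSemidef.conjTranspose_mul_mul_same (hpsd a) U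
  have hNleD : ∀ a, (Matrix.diagonal (fun i => (d i : ℂ)) - N a).PosSemidef := by
    intro a
    have hρσ : ρ - σ a = ∑ b ∈ Finset.univ.erase a, σ b := by
      rw [← hsum, ← Finset.add_sum_erase _ _ (Finset.mem_univ a), add_sub_cancel_left]
    have hpsd2 : (ρ - σ a).PosSemidef := by
      rw [hρσ]; exact psd_sum _ _ fun b _ => hpsd b
    have : Matrix.diagonal (fun i => (d i : ℂ)) - N a = star U * (ρ - σ a) * U := by
      rw [← hdiag, hN]
      simp [Matrix.mul_sub, Matrix.sub_mul]
    rw [this]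
    simpa [Matrix.star_eq_conjTranspose] using
      Matrix.PosSemidef.conjTranspose_mul_mul_same hpsd2 U
  have hvanish : ∀ a i j, (d i = 0 ∨ d j = 0) → N a i j = 0 := by
    have hdiagzero : ∀ a i, d i = 0 → N a i i = 0 := by
      intro a i hi
      have h1 := psd_diag_re (hNpsd a) i
      have h2 := psd_diag_re (hNleD a) i
      have h3 := psd_diag_im (hNpsd a) i
      simp only [Matrix.sub_apply, Matrix.diagonal_apply_eq, hi, Complex.sub_re,
        Complex.ofReal_zero, Complex.zero_re] at h2
      apply Complex.ext
      · simp only [Complex.zero_re]; linarith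
      · simp [h3]
    intro a i j hij
    rcases hij with hi | hj
    · exact psd_entry_zero (hNpsd a) (hdiagzero a i hi) j
    · rw [psd_conj_entry (hNpsd a) j i, psd_entry_zero (hNpsd a) (hdiagzero a j hj) i, map_zero]
  -- linear dependence of the compressed matrices
  have hnotli : ¬ LinearIndependent ℂ
      (fun a : {a // a ∈ S} => (N a.val).submatrix
        (fun i : {i // d i ≠ 0} => i.val) (fun j : {j // d j ≠ 0} => j.val)) := by
    intro hli
    have hle := hli.fintype_card_le_finrank
    rw [Module.finrank_matrix, Module.finrank_self, mul_one, Fintype.card_coe] at hle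
    rw [hrank] at hcard
    rw [pow_two] at hcard
    omega
  obtain ⟨g, hg0, a₀, hga₀⟩ := Fintype.not_linearIndependent_iff.1 hnotli
  have hNdep : ∑ a : {a // a ∈ S}, g a • N a.val = 0 := by
    ext i j
    by_cases hi : d i = 0
    · simp [Matrix.sum_apply, hvanish _ _ _ (Or.inl hi)]
    by_cases hj : d j = 0
    · simp [Matrix.sum_apply, hvanish _ _ _ (Or.inr hj)]
    · have h0 := congrFun (congrFun hg0 ⟨i, hi⟩) ⟨j, hj⟩
      simp only [Matrix.sum_apply, Matrix.smul_apply, Matrix.submatrix_apply,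
        Matrix.zero_apply, smul_eq_mul] at h0 ⊢
      exact h0
  have hXdep : ∑ a : {a // a ∈ S}, g a • σ a.val = 0 := by
    have hrecover : ∀ X : Matrix n n ℂ, U * (star U * X * U) * star U = X := by
      intro X
      simp only [← mul_assoc]
      rw [hU1, one_mul, mul_assoc, hU1, mul_one]
    have h1 : U * (∑ a : {a // a ∈ S}, g a • N a.val) * star U = 0 := by
      rw [hNdep, Matrix.mul_zero, Matrix.zero_mul]
    rw [Finset.mul_sum, Finset.sum_mul] at h1
    have h2 : ∀ a : {a // a ∈ S}, U * (g a • N a.val) * star U = g a • σ a.val := by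
      intro a
      rw [hN]
      rw [Matrix.mul_smul, Matrix.smul_mul]
      rw [hrecover]
    rw [← h1]
    exact Finset.sum_congr rfl fun a _ => (h2 a).symm
  -- conjugate dependence
  have hconjdep : ∑ a : {a // a ∈ S}, (starRingEnd ℂ) (g a) • σ a.val = 0 := by
    have h := congrArg Matrix.conjTranspose hXdep
    rw [Matrix.conjTranspose_sum] at h
    simp only [Matrix.conjTranspose_smul, Complex.star_def, Matrix.conjTranspose_zero] at h
    convert h using 2 with a
    rw [(hpsd a.val).1.eq]
  have hredep : ∑ a : {a // a ∈ S}, (((g a).re : ℝ) : ℂ) • σ a.val = 0 := by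
    have hcomb : ∀ a : {a // a ∈ S}, (((g a).re : ℝ) : ℂ) • σ a.val
        = ((1:ℂ)/2) • (g a • σ a.val) + ((1:ℂ)/2) • ((starRingEnd ℂ) (g a) • σ a.val) := by
      intro a
      rw [smul_smul, smul_smul, ← add_smul]
      congr 1
      have h2 := Complex.add_conj (g a)
      push_cast at h2 ⊢
      linear_combination -h2/2
    rw [Finset.sum_congr rfl fun a _ => hcomb a, Finset.sum_add_distrib,
      ← Finset.smul_sum, ← Finset.smul_sum, hXdep, hconjdep]
    simp
  have himdep : ∑ a : {a // a ∈ S}, (((g a).im : ℝ) : ℂ) • σ a.val = 0 := by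
    have hcomb : ∀ a : {a // a ∈ S}, (((g a).im : ℝ) : ℂ) • σ a.val
        = ((1:ℂ)/(2*Complex.I)) • (g a • σ a.val)
          - ((1:ℂ)/(2*Complex.I)) • ((starRingEnd ℂ) (g a) • σ a.val) := by
      intro a
      rw [smul_smul, smul_smul, ← sub_smul]
      congr 1
      have h2 := Complex.sub_conj (g a)
      have hI : Complex.I ≠ 0 := Complex.I_ne_zero
      field_simp
      ring
      push_cast at h2 ⊢
      linear_combination (-1 : ℂ) * h2
    rw [Finset.sum_congr rfl fun a _ => hcomb a, Finset.sum_sub_distrib,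
      ← Finset.smul_sum, ← Finset.smul_sum, hXdep, hconjdep]
    simp
  -- choose the real or imaginary part
  have hgre_or : (g a₀).re ≠ 0 ∨ (g a₀).im ≠ 0 := by
    by_contra hcon
    push_neg at hcon
    exact hga₀ (Complex.ext hcon.1 hcon.2)
  obtain ⟨w, hwdep, hwa₀⟩ : ∃ w : {a // a ∈ S} → ℝ,
      (∑ a : {a // a ∈ S}, ((w a : ℝ) : ℂ) • σ a.val = 0) ∧ w a₀ ≠ 0 := by
    rcases hgre_or with h | h
    · exact ⟨fun a => (g a).re, hredep, h⟩
    · exact ⟨fun a => (g a).im, himdep, h⟩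
  refine ⟨fun a => if h : a ∈ S then w ⟨a, h⟩ else 0, ?_, ⟨a₀.val, ?_⟩, ?_⟩
  · have h1 : ∑ a : ι, (((if h : a ∈ S then w ⟨a, h⟩ else 0 : ℝ)) : ℂ) • σ a
        = ∑ a ∈ S, (((if h : a ∈ S then w ⟨a, h⟩ else 0 : ℝ)) : ℂ) • σ a := by
      refine (Finset.sum_subset (Finset.subset_univ S) ?_).symm
      intro a _ haS
      rw [dif_neg haS]
      simp
    rw [h1, ← Finset.sum_attach S (fun a => (((if h : a ∈ S then w ⟨a, h⟩ else 0 : ℝ)) : ℂ) • σ a),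
      ← hwdep, Finset.univ_eq_attach]
    refine Finset.sum_congr rfl fun x _ => ?_
    rw [dif_pos x.2]
  · show (if h : a₀.val ∈ S then w ⟨a₀.val, h⟩ else 0) ≠ 0
    rw [dif_pos a₀.2]
    simpa using hwa₀
  · intro a ha
    by_cases h : a ∈ S
    · rw [hS] at h
      exact (Finset.mem_filter.1 h).2
    · exact absurd (dif_neg h) ha

lemma reduction_step {n ι : Type*} [Fintype n] [DecidableEq n] [Fintype ι]
    (ρ : Matrix n n ℂ) (hρ : ρ.PosSemidef)
    (A : ι → Matrix n n ℂ)
    (σ : ι → Matrix n n ℂ) (hpsd : ∀ a, (σ a).PosSemidef) (hsum : ∑ a, σ a = ρ)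
    (hopt : ∀ τ : ι → Matrix n n ℂ, (∀ a, (τ a).PosSemidef) → (∑ a, τ a = ρ) →
      (∑ a, ((σ a) * (A a)).trace).re ≤ (∑ a, ((τ a) * (A a)).trace).re)
    (hcard : ρ.rank ^ 2 < (Finset.univ.filter fun a => σ a ≠ 0).card) :
    ∃ τ : ι → Matrix n n ℂ, (∀ a, (τ a).PosSemidef) ∧ (∑ a, τ a = ρ) ∧
      ((∑ a, ((τ a) * (A a)).trace).re = (∑ a, ((σ a) * (A a)).trace).re) ∧
      (Finset.univ.filter fun a => τ a ≠ 0).card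
        < (Finset.univ.filter fun a => σ a ≠ 0).card := by
  classical
  obtain ⟨c₀, hdep₀, ⟨b₀, hb₀⟩, hsupp₀⟩ := exists_real_dependence ρ hρ σ hpsd hsum hcard
  obtain ⟨c, hdep, ⟨a₀, ha₀⟩, hsupp⟩ : ∃ c : ι → ℝ,
      (∑ a, ((c a : ℝ):ℂ) • σ a = 0) ∧ (∃ a, 0 < c a) ∧ (∀ a, c a ≠ 0 → σ a ≠ 0) := by
    rcases lt_or_ge 0 (c₀ b₀) with h | h
    · exact ⟨c₀, hdep₀, ⟨b₀, h⟩, hsupp₀⟩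
    · refine ⟨fun a => -c₀ a, ?_, ⟨b₀, neg_pos.2 (lt_of_le_of_ne h hb₀)⟩,
        fun a ha => hsupp₀ a (fun h0 => ha (by simp [h0]))⟩
      simp only [Complex.ofReal_neg, neg_smul, Finset.sum_neg_distrib, hdep₀, neg_zero]
  -- the derivative of the objective along the perturbation direction
  set K : ℝ := ∑ a, c a * ((σ a * A a).trace).re with hK
  have hterm : ∀ (r : ℝ) (a : ι), ((((r:ℝ):ℂ) • σ a * A a).trace).re
      = r * ((σ a * A a).trace).re := by
    intro r a
    rw [Matrix.smul_mul, Matrix.trace_smul, smul_eq_mul]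
    simp [Complex.mul_re]
  have hgen : ∀ s : ℝ, (∀ a, 0 ≤ 1 - s * c a) →
      (∀ a, ((((1 - s * c a : ℝ):ℂ)) • σ a).PosSemidef) ∧
      (∑ a, (((1 - s * c a : ℝ):ℂ)) • σ a = ρ) ∧
      ((∑ a, (((((1 - s * c a : ℝ):ℂ)) • σ a) * (A a)).trace).re
        = (∑ a, ((σ a) * (A a)).trace).re - s * K) := by
    intro s hs
    refine ⟨fun a => psd_smul_real (hs a) (hpsd a), ?_, ?_⟩
    · have hsplit : ∀ a : ι, (((1 - s * c a : ℝ):ℂ)) • σ a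
          = σ a - ((s:ℝ):ℂ) • ((((c a : ℝ)):ℂ) • σ a) := by
        intro a
        push_cast
        rw [sub_smul, one_smul, smul_smul]
      rw [Finset.sum_congr rfl fun a _ => hsplit a, Finset.sum_sub_distrib, hsum,
        ← Finset.smul_sum, hdep, smul_zero, sub_zero]
    · have hterm2 : ∀ a : ι, (((((1 - s * c a : ℝ):ℂ)) • σ a * A a).trace).re
          = ((σ a * A a).trace).re - s * (c a * ((σ a * A a).trace).re) := by
        intro a
        rw [hterm (1 - s * c a) a]
        ring
      rw [Complex.re_sum, Finset.sum_congr rfl fun a _ => hterm2 a,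
        Finset.sum_sub_distrib, ← Finset.mul_sum, ← hK, Complex.re_sum]
  have hKzero : K = 0 := by
    set B : ℝ := ∑ a, |c a| with hB
    have hBnn : 0 ≤ B := Finset.sum_nonneg fun a _ => abs_nonneg _
    have hpos : 0 < 1 + B := by linarith
    set ε : ℝ := (1 + B)⁻¹ with hε
    have hεpos : 0 < ε := inv_pos.2 hpos
    have h6 : ε * B = 1 - ε := by
      rw [hε]
      field_simp
      ring
    have habs : ∀ (a : ι) (s : ℝ), |s| ≤ ε → 0 ≤ 1 - s * c a := by
      intro a s hsle
      have h1 : |s * c a| ≤ ε * |c a| := by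
        rw [abs_mul]
        exact mul_le_mul_of_nonneg_right hsle (abs_nonneg _)
      have h2 : |c a| ≤ B := Finset.single_le_sum (fun b _ => abs_nonneg (c b))
        (Finset.mem_univ a)
      have h3 : ε * |c a| ≤ ε * B := mul_le_mul_of_nonneg_left h2 hεpos.le
      have h4 := le_abs_self (s * c a)
      linarith
    have hsp := hgen ε (fun a => habs a ε (by rw [abs_of_pos hεpos]))
    have hsm := hgen (-ε) (fun a => habs a (-ε) (by rw [abs_neg, abs_of_pos hεpos]))
    have o1 := hopt _ hsp.1 hsp.2.1
    rw [hsp.2.2] at o1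
    have o2 := hopt _ hsm.1 hsm.2.1
    rw [hsm.2.2] at o2
    have hεK : ε * K = 0 := le_antisymm (by linarith) (by linarith)
    exact (mul_eq_zero.1 hεK).resolve_left hεpos.ne'
  obtain ⟨a₁, ha₁P, ha₁min⟩ := Finset.exists_min_image
    (Finset.univ.filter fun a => 0 < c a) (fun a => (c a)⁻¹)
    ⟨a₀, Finset.mem_filter.2 ⟨Finset.mem_univ _, ha₀⟩⟩
  have hca₁ : 0 < c a₁ := (Finset.mem_filter.1 ha₁P).2
  set t : ℝ := (c a₁)⁻¹ with htdef
  have htpos : 0 < t := inv_pos.2 hca₁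
  have hcoef : ∀ a, 0 ≤ 1 - t * c a := by
    intro a
    rcases le_or_gt (c a) 0 with h | h
    · nlinarith
    · have hmin := ha₁min a (Finset.mem_filter.2 ⟨Finset.mem_univ _, h⟩)
      have h1 : t * c a ≤ 1 := by
        calc t * c a ≤ (c a)⁻¹ * c a := mul_le_mul_of_nonneg_right hmin h.le
        _ = 1 := inv_mul_cancel₀ h.ne'
      linarith
  obtain ⟨hτpsd, hτsum, hτobj⟩ := hgen t hcoef
  refine ⟨fun a => (((1 - t * c a : ℝ):ℂ)) • σ a, hτpsd, hτsum, by rw [hτobj, hKzero]; ring, ?_⟩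
  have hsub : (Finset.univ.filter fun a => (((1 - t * c a : ℝ):ℂ)) • σ a ≠ 0)
      ⊆ (Finset.univ.filter fun a => σ a ≠ 0).erase a₁ := by
    intro a ha
    have h1 := (Finset.mem_filter.1 ha).2
    have hσa : σ a ≠ 0 := by
      intro h0
      exact h1 (by rw [h0, smul_zero])
    refine Finset.mem_erase.2 ⟨?_, Finset.mem_filter.2 ⟨Finset.mem_univ _, hσa⟩⟩
    intro heq
    apply h1
    subst heq
    have h2 : t * c a = 1 := inv_mul_cancel₀ hca₁.ne'
    rw [h2]
    simp
  have hmem : a₁ ∈ (Finset.univ.filter fun a => σ a ≠ 0) :=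
    Finset.mem_filter.2 ⟨Finset.mem_univ _, hsupp a₁ hca₁.ne'⟩
  calc (Finset.univ.filter fun a => (((1 - t * c a : ℝ):ℂ)) • σ a ≠ 0).card
      ≤ ((Finset.univ.filter fun a => σ a ≠ 0).erase a₁).card := Finset.card_le_card hsub
    _ < (Finset.univ.filter fun a => σ a ≠ 0).card := Finset.card_erase_lt_of_mem hmem

lemma isClosed_psd {n : Type*} [Fintype n] [DecidableEq n] :
    IsClosed {M : Matrix n n ℂ | M.PosSemidef} := by
  have h1 : IsClosed {M : Matrix n n ℂ | M.IsHermitian} := by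
    have hc : Continuous (fun M : Matrix n n ℂ => Mᴴ) := by
      let L : Matrix n n ℂ →ₗ[ℝ] Matrix n n ℂ :=
        { toFun := fun M => Mᴴ
          map_add' := fun M N => Matrix.conjTranspose_add M N
          map_smul' := fun r M => by
            ext i j
            simp [Matrix.conjTranspose_apply, Matrix.smul_apply, star_smul, star_trivial]
          }
      exact L.continuous_of_finiteDimensional
    exact isClosed_eq hc continuous_id
  have hcone : IsClosed {z : ℂ | 0 ≤ z} := by
    have hset : {z : ℂ | 0 ≤ z} = Complex.re ⁻¹' Set.Ici 0 ∩ Complex.im ⁻¹' {0} := by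
      ext z
      simp [Complex.le_def, eq_comm]
    rw [hset]
    exact (isClosed_Ici.preimage Complex.continuous_re).inter
      (isClosed_singleton.preimage Complex.continuous_im)
  have hquad : ∀ x : n → ℂ, Continuous (fun M : Matrix n n ℂ => star x ⬝ᵥ M *ᵥ x) := by
    intro x
    let L : Matrix n n ℂ →ₗ[ℂ] ℂ :=
      { toFun := fun M => star x ⬝ᵥ M *ᵥ x
        map_add' := fun M N => by
          show star x ⬝ᵥ (M + N) *ᵥ x = star x ⬝ᵥ M *ᵥ x + star x ⬝ᵥ N *ᵥ x
          rw [Matrix.add_mulVec, dotProduct_add]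
        map_smul' := fun r M => by
          show star x ⬝ᵥ (r • M) *ᵥ x = r • (star x ⬝ᵥ M *ᵥ x)
          rw [Matrix.smul_mulVec, dotProduct_smul] }
    exact L.continuous_of_finiteDimensional
  have hset2 : {M : Matrix n n ℂ | M.PosSemidef}
      = {M | M.IsHermitian} ∩ ⋂ x : n → ℂ, {M | 0 ≤ star x ⬝ᵥ M *ᵥ x} := by
    ext M
    constructor
    · intro h
      exact ⟨h.1, Set.mem_iInter.2 fun x => h.dotProduct_mulVec_nonneg x⟩
    · intro h
      exact Matrix.PosSemidef.of_dotProduct_mulVec_nonneg h.1 fun x => Set.mem_iInter.1 h.2 x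
  rw [hset2]
  exact h1.inter (isClosed_iInter fun x => (hcone.preimage (hquad x)))

lemma obj_continuous {n ι : Type*} [Fintype n] [DecidableEq n] [Fintype ι]
    (A : ι → Matrix n n ℂ) :
    Continuous (fun σ : ι → Matrix n n ℂ => (∑ a, ((σ a) * (A a)).trace).re) := by
  let L : (ι → Matrix n n ℂ) →ₗ[ℝ] ℝ :=
    { toFun := fun σ => (∑ a, ((σ a) * (A a)).trace).re
      map_add' := by
        intro σ τ
        simp [Matrix.add_mul, Matrix.trace_add, Finset.sum_add_distrib, Complex.add_re]
      map_smul' := by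
        intro r σ
        simp only [Pi.smul_apply, Matrix.smul_mul, Matrix.trace_smul, RingHom.id_apply]
        rw [← Finset.smul_sum, Complex.smul_re] }
  exact L.continuous_of_finiteDimensional

open Classical in
/-- The measurement SDP admits an optimal solution supported on at most `r²` outcomes,
where `r` is the rank of the density matrix `ρ`. -/
theorem sdp_optimal_solution_rank_squared_outcomes
    {n ι : Type*} [Fintype n] [DecidableEq n] [Fintype ι] [Nonempty ι]
    (ρ : Matrix n n ℂ) (hρ : ρ.PosSemidef) (hρtr : ρ.trace = 1)
    (A : ι → Matrix n n ℂ) (hA : ∀ a, (A a).IsHermitian) :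
    ∃ σ : ι → Matrix n n ℂ,
      (∀ a, (σ a).PosSemidef) ∧ (∑ a, σ a = ρ) ∧
      (∀ τ : ι → Matrix n n ℂ, (∀ a, (τ a).PosSemidef) → (∑ a, τ a = ρ) →
        (∑ a, ((σ a) * (A a)).trace).re ≤ (∑ a, ((τ a) * (A a)).trace).re) ∧
      (Finset.univ.filter fun a => σ a ≠ 0).card ≤ ρ.rank ^ 2 := by
  classical
  set F : Set (ι → Matrix n n ℂ) := {σ | (∀ a, (σ a).PosSemidef) ∧ ∑ a, σ a = ρ} with hF
  obtain ⟨a₀⟩ := ‹Nonempty ι›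
  have hFne : F.Nonempty := by
    refine ⟨fun a => if a = a₀ then ρ else 0, fun a => ?_, ?_⟩
    · by_cases h : a = a₀ <;> simp [h, hρ, Matrix.PosSemidef.zero]
    · simp [Finset.sum_ite_eq' Finset.univ a₀ (fun _ => ρ)]
  have hFclosed : IsClosed F := by
    have h1 : IsClosed {σ : ι → Matrix n n ℂ | ∀ a, (σ a).PosSemidef} := by
      have hs : {σ : ι → Matrix n n ℂ | ∀ a, (σ a).PosSemidef}
          = ⋂ a, (fun σ : ι → Matrix n n ℂ => σ a) ⁻¹' {M | M.PosSemidef} := by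
        ext σ
        simp [Set.mem_iInter]
      rw [hs]
      exact isClosed_iInter fun a => isClosed_psd.preimage (continuous_apply a)
    have h2 : IsClosed {σ : ι → Matrix n n ℂ | ∑ a, σ a = ρ} := by
      have hc : Continuous (fun σ : ι → Matrix n n ℂ => ∑ a, σ a) :=
        continuous_finset_sum _ fun a _ => continuous_apply a
      exact isClosed_eq hc continuous_const
    rw [hF, Set.setOf_and]
    exact h1.inter h2
  have hFbdd : Bornology.IsBounded F := by
    apply Bornology.IsBounded.subset (Metric.isBounded_closedBall (x := (0 : ι → Matrix n n ℂ)) (r := 1))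
    intro σ hσ
    rw [Metric.mem_closedBall, dist_zero_right]
    apply pi_norm_le_iff_of_nonneg zero_le_one |>.2
    intro a
    rw [Matrix.norm_le_iff zero_le_one]
    intro i j
    have htr : ∑ b, ((σ b).trace).re = 1 := by
      rw [← Complex.re_sum, ← Matrix.trace_sum, hσ.2, hρtr, Complex.one_re]
    have hle1 : ((σ a).trace).re ≤ 1 := by
      rw [← htr]
      exact Finset.single_le_sum (fun b _ => psd_trace_re_nonneg (hσ.1 b)) (Finset.mem_univ a)
    exact le_trans (psd_entry_norm_le (hσ.1 a) i j) hle1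
  have hFcompact : IsCompact F := Metric.isCompact_of_isClosed_isBounded hFclosed hFbdd
  obtain ⟨σm, hσF, hmin⟩ := hFcompact.exists_isMinOn hFne (obj_continuous A).continuousOn
  have key : ∀ k : ℕ, ∀ σ : ι → Matrix n n ℂ, (∀ a, (σ a).PosSemidef) → (∑ a, σ a = ρ) →
      (∀ τ : ι → Matrix n n ℂ, (∀ a, (τ a).PosSemidef) → (∑ a, τ a = ρ) →
        (∑ a, ((σ a) * (A a)).trace).re ≤ (∑ a, ((τ a) * (A a)).trace).re) →
      (Finset.univ.filter fun a => σ a ≠ 0).card ≤ k →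
      ∃ σ' : ι → Matrix n n ℂ,
        (∀ a, (σ' a).PosSemidef) ∧ (∑ a, σ' a = ρ) ∧
        (∀ τ : ι → Matrix n n ℂ, (∀ a, (τ a).PosSemidef) → (∑ a, τ a = ρ) →
          (∑ a, ((σ' a) * (A a)).trace).re ≤ (∑ a, ((τ a) * (A a)).trace).re) ∧
        (Finset.univ.filter fun a => σ' a ≠ 0).card ≤ ρ.rank ^ 2 := by
    intro k
    induction k with
    | zero =>
      intro σ h1 h2 h3 h4
      exact ⟨σ, h1, h2, h3, le_trans h4 (Nat.zero_le _)⟩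
    | succ k ih =>
      intro σ h1 h2 h3 h4
      by_cases hle : (Finset.univ.filter fun a => σ a ≠ 0).card ≤ ρ.rank ^ 2
      · exact ⟨σ, h1, h2, h3, hle⟩
      · push_neg at hle
        obtain ⟨τ, ht1, ht2, ht3, ht4⟩ := reduction_step ρ hρ A σ h1 h2 h3 hle
        exact ih τ ht1 ht2 (fun υ hu1 hu2 => by rw [ht3]; exact h3 υ hu1 hu2) (by omega)
  exact key _ σm hσF.1 hσF.2 (fun τ t1 t2 => isMinOn_iff.1 hmin τ ⟨t1, t2⟩) le_rfl
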